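/- Under the same hypotheses (𝒢¹ ⊆ 𝒢, 𝒢² independent of 𝒢, X integrable and 𝒢-measurable, Y integrable and independent of σ(𝒢, 𝒢²), XY integrable), for every set G = G₁ ∩ G₂ with G₁ ∈ 𝒢¹ and G₂ ∈ 𝒢², one has E(XY·1_G) = E(Y)·E(E(X|𝒢¹)·1_G). -/

import Mathlib

open MeasureTheory ProbabilityTheory

private lemma aux_ind_integrable {Ω : Type*} {m : MeasurableSpace Ω} {μ : Measure Ω}
    {f : Ω → ℝ} {s : Set Ω} (hf : Integrable f μ) (hs : MeasurableSet[m] s) :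
    Integrable (s.indicator f) μ := hf.indicator hs

private lemma aux_integ_ind {Ω : Type*} {m : MeasurableSpace Ω} {μ : Measure Ω}
    (f : Ω → ℝ) {s : Set Ω} (hs : MeasurableSet[m] s) :
    ∫ ω, s.indicator f ω ∂μ = ∫ ω in s, f ω ∂μ := integral_indicator hs

private lemma aux_integ_one {Ω : Type*} {m : MeasurableSpace Ω} (μ : Measure Ω)
    {s : Set Ω} (hs : MeasurableSet[m] s) :
    ∫ ω, s.indicator (1 : Ω → ℝ) ω ∂μ = (μ s).toReal := by
  rw [aux_integ_ind _ hs]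
  simp
  rfl

private lemma aux_setIntegral_condexp {Ω : Type*} {m m0 : MeasurableSpace Ω} {μ : Measure Ω}
    [IsProbabilityMeasure μ] (hm : m ≤ m0) {f : Ω → ℝ} (hf : Integrable f μ)
    {s : Set Ω} (hs : MeasurableSet[m] s) :
    ∫ ω in s, (μ[f|m]) ω ∂μ = ∫ ω in s, f ω ∂μ := setIntegral_condExp hm hf hs

/-- Under the hypotheses of the conditional product lemma, for every
`G = G₁ ∩ G₂` with `G₁ ∈ 𝒢¹`, `G₂ ∈ 𝒢²`,
`E(XY·1_G) = E(Y) · E(E(X|𝒢¹)·1_G)`. -/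
theorem stmt_1 {Ω : Type*} {m : MeasurableSpace Ω} (μ : Measure Ω) [IsProbabilityMeasure μ]
    (G1 G2 G : MeasurableSpace Ω) (hG1G : G1 ≤ G) (hGm : G ≤ m) (hG1m : G1 ≤ m)
    (hG2m : G2 ≤ m)
    (X Y : Ω → ℝ)
    (hX : Integrable X μ) (hY : Integrable Y μ)
    (hXY : Integrable (fun ω => X ω * Y ω) μ)
    (hXmeas : Measurable[G] X)
    (hG2indep : Indep G2 G μ)
    (hYindep : Indep (MeasurableSpace.comap Y inferInstance) (G ⊔ G2) μ) :
    ∀ A B : Set Ω, MeasurableSet[G1] A → MeasurableSet[G2] B →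
      ∫ ω in A ∩ B, X ω * Y ω ∂μ
        = (∫ ω, Y ω ∂μ) * ∫ ω in A ∩ B, (μ[X | G1]) ω ∂μ := by
  intro A B hA1 hB2
  have hAG : MeasurableSet[G] A := hG1G _ hA1
  have hAm : MeasurableSet[m] A := hGm _ hAG
  have hBm : MeasurableSet[m] B := hG2m _ hB2
  have hABm : MeasurableSet[m] (A ∩ B) := hAm.inter hBm
  have hABsup : MeasurableSet[G ⊔ G2] (A ∩ B) :=
    ((le_sup_left : G ≤ G ⊔ G2) _ hAG).inter ((le_sup_right : G2 ≤ G ⊔ G2) _ hB2)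
  have hfmeas : Measurable[G ⊔ G2] ((A ∩ B).indicator X) :=
    (hXmeas.mono le_sup_left le_rfl).indicator hABsup
  have hfInt : Integrable ((A ∩ B).indicator X) μ := aux_ind_integrable hX hABm
  have hIndYf : IndepFun Y ((A ∩ B).indicator X) μ :=
    indep_of_indep_of_le_right hYindep hfmeas.comap_le
  have heq1 : ((A ∩ B).indicator X) * Y = (A ∩ B).indicator (fun ω => X ω * Y ω) := by
    ext ω
    by_cases h : ω ∈ A ∩ B <;> simp [Set.indicator_of_mem, Set.indicator_of_notMem, h]
  have step1 : ∫ ω in A ∩ B, X ω * Y ω ∂μ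
      = (∫ ω, Y ω ∂μ) * ∫ ω in A ∩ B, X ω ∂μ := by
    calc ∫ ω in A ∩ B, X ω * Y ω ∂μ
        = ∫ ω, (A ∩ B).indicator (fun ω => X ω * Y ω) ω ∂μ :=
          (aux_integ_ind _ hABm).symm
      _ = integral μ (Y * ((A ∩ B).indicator X)) := by
          rw [← heq1, mul_comm ((A ∩ B).indicator X) Y]
      _ = integral μ Y * integral μ ((A ∩ B).indicator X) :=
          hIndYf.integral_mul_eq_mul_integral hY.aestronglyMeasurable hfInt.aestronglyMeasurable
      _ = (∫ ω, Y ω ∂μ) * ∫ ω in A ∩ B, X ω ∂μ := by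
          rw [← aux_integ_ind X hABm]
  have key : ∀ Z : Ω → ℝ, Measurable[G] Z → Integrable Z μ →
      ∫ ω in A ∩ B, Z ω ∂μ = (μ B).toReal * ∫ ω in A, Z ω ∂μ := by
    intro Z hZmeas hZint
    have hgmeas : Measurable[G] (A.indicator Z) := hZmeas.indicator hAG
    have hgInt : Integrable (A.indicator Z) μ := aux_ind_integrable hZint hAm
    have hindB : Measurable[G2] (B.indicator (1 : Ω → ℝ)) :=
      (measurable_const : Measurable[G2] (1 : Ω → ℝ)).indicator hB2
    have hIndep : IndepFun (B.indicator (1 : Ω → ℝ)) (A.indicator Z) μ :=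
      indep_of_indep_of_le_right (indep_of_indep_of_le_left hG2indep hindB.comap_le)
        hgmeas.comap_le
    have hBInt : Integrable (B.indicator (1 : Ω → ℝ)) μ :=
      aux_ind_integrable (integrable_const (1 : ℝ)) hBm
    have heq : (B.indicator (1 : Ω → ℝ)) * (A.indicator Z) = (A ∩ B).indicator Z := by
      ext ω
      by_cases hωA : ω ∈ A <;> by_cases hωB : ω ∈ B <;>
        simp [Set.indicator_of_mem, Set.indicator_of_notMem, hωA, hωB, Set.mem_inter_iff]
    calc ∫ ω in A ∩ B, Z ω ∂μ
        = ∫ ω, (A ∩ B).indicator Z ω ∂μ := (aux_integ_ind _ hABm).symm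
      _ = integral μ ((B.indicator (1 : Ω → ℝ)) * (A.indicator Z)) := by rw [heq]
      _ = integral μ (B.indicator (1 : Ω → ℝ)) * integral μ (A.indicator Z) :=
          hIndep.integral_mul_eq_mul_integral hBInt.aestronglyMeasurable hgInt.aestronglyMeasurable
      _ = (μ B).toReal * ∫ ω in A, Z ω ∂μ := by
          rw [← aux_integ_ind Z hAm, ← aux_integ_one μ hBm]
  have hCEmeas : Measurable[G] (μ[X | G1]) :=
    stronglyMeasurable_condExp.measurable.mono hG1G le_rfl
  have hCEint : Integrable (μ[X | G1]) μ := integrable_condExp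
  rw [step1, key X hXmeas hX, key (μ[X | G1]) hCEmeas hCEint,
    aux_setIntegral_condexp hG1m hX hA1]
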